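/- Let p ≥ 3 be a prime and let μ be a probability distribution on F_p supported on more than one value. For any s ≥ 1, ℓ ≥ 1 and ε > 0, there exist L ∈ ℕ and N ∈ ℕ such that the following holds for all n ≥ N. Let B ∈ F_p^{(n−s)×n} be a fixed matrix for which there exist L pairwise disjoint sets I_1,…,I_L ⊆ {1,…,n}, each of size s, such that for each i the (n−s)×(n−s) matrix obtained from B by deleting the columns indexed by I_i has nonzero permanent. Let x ∈ F_p^n be a random vector with independent μ-distributed entries, and let B′ ∈ F_p^{(n−s+1)×n} be the matrix obtained from B by appending x as an additional last row. Then, with probability at least 1 − p^{-s} − ε, there exist ℓ pairwise disjoint sets J_1,…,J_ℓ ⊆ {1,…,n}, each of size s−1, such that for each j the (n−s+1)×(n−s+1) matrix obtained from B′ by deleting the columns indexed by J_j has nonzero permanent. -/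

import Mathlib

open scoped Classical



section PermanentExpansion

open Equiv Finset Matrix

variable {R : Type*} [CommSemiring R]

theorem my_permanent_succ_column_zero {m : ℕ} (M : Matrix (Fin (m+1)) (Fin (m+1)) R) :
    M.permanent = ∑ j : Fin (m+1), M j 0 * (M.submatrix j.succAbove Fin.succ).permanent := by
  rw [Matrix.permanent, Finset.univ_perm_fin_succ, ← Finset.univ_product_univ, Finset.sum_map,
    Finset.sum_product]
  refine Finset.sum_congr rfl fun j _ => ?_
  rw [Matrix.permanent, Finset.mul_sum]
  induction j using Fin.cases with
  | zero =>
    refine Finset.sum_congr rfl fun τ _ => ?_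
    rw [Fin.prod_univ_succ]
    simp only [Equiv.toEmbedding_apply, Equiv.Perm.decomposeFin_symm_apply_zero,
      Equiv.Perm.decomposeFin_symm_apply_succ, Equiv.swap_self, Equiv.refl_apply,
      Matrix.submatrix_apply, Fin.zero_succAbove]
  | succ j' =>
    have h1 : ∀ τ : Perm (Fin m), ∏ i, M (Equiv.Perm.decomposeFin.symm.toEmbedding (j'.succ, τ) i) i
        = M j'.succ 0 * ∏ i, (M.submatrix j'.succ.succAbove Fin.succ) ((j'.cycleRange * τ) i) i := by
      intro τ
      rw [Fin.prod_univ_succ, Equiv.toEmbedding_apply, Equiv.Perm.decomposeFin_symm_apply_zero]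
      congr 1
      refine Finset.prod_congr rfl fun i _ => ?_
      rw [Matrix.submatrix_apply, Equiv.Perm.mul_apply, Fin.succAbove_cycleRange]
      rw [Equiv.Perm.decomposeFin_symm_apply_succ]
    rw [Finset.sum_congr rfl fun τ _ => h1 τ]
    exact (Group.mulLeft_bijective j'.cycleRange).sum_comp
      (fun τ => M j'.succ 0 * ∏ i, (M.submatrix j'.succ.succAbove Fin.succ) (τ i) i)

theorem my_permanent_expand_snoc {m : ℕ} (A : Fin m → Fin (m+1) → R) (x : Fin (m+1) → R) :
    (Matrix.of (Fin.snoc A x)).permanent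
      = ∑ q : Fin (m+1), x q * (Matrix.of (fun r c => A r (q.succAbove c))).permanent := by
  have h0 : (Matrix.of (Fin.snoc A x)).permanent
      = ((Matrix.of (Fin.snoc A x))ᵀ.submatrix id Fin.revPerm).permanent := by
    rw [Matrix.permanent_permute_rows, Matrix.permanent_transpose]
  rw [h0, my_permanent_succ_column_zero]
  refine Finset.sum_congr rfl fun q _ => ?_
  congr 1
  · show (Matrix.of (Fin.snoc A x)) (Fin.revPerm 0) q = x q
    simp [Fin.rev_zero, Fin.snoc_last]
  · have h2 : (((Matrix.of (Fin.snoc A x))ᵀ.submatrix id Fin.revPerm).submatrix q.succAbove Fin.succ)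
        = ((Matrix.of (fun r c => A r (q.succAbove c)))ᵀ).submatrix id Fin.revPerm := by
      ext r c
      show (Matrix.of (Fin.snoc A x)) ((Fin.succ c).rev) (q.succAbove r) = A (c.rev) (q.succAbove r)
      rw [Fin.rev_succ]
      simp [Fin.snoc_castSucc]
    rw [h2, Matrix.permanent_permute_rows, Matrix.permanent_transpose]

theorem my_permanent_submatrix_range_eq {m n : ℕ} (B : Matrix (Fin m) (Fin n) R)
    (g₁ g₂ : Fin m → Fin n) (h₁ : Function.Injective g₁) (h₂ : Function.Injective g₂)
    (hr : Set.range g₁ = Set.range g₂) :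
    (B.submatrix id g₁).permanent = (B.submatrix id g₂).permanent := by
  have key : ∀ k, g₁ k ∈ Set.range g₂ := fun k => hr ▸ Set.mem_range_self k
  let e : Fin m ≃ Fin m :=
    (Equiv.ofInjective g₁ h₁).trans ((Equiv.setCongr hr).trans (Equiv.ofInjective g₂ h₂).symm)
  have he : ∀ k, g₂ (e k) = g₁ k := by
    intro k
    show g₂ ((Equiv.ofInjective g₂ h₂).symm ⟨g₁ k, key k⟩) = g₁ k
    exact Equiv.apply_ofInjective_symm h₂ ⟨g₁ k, key k⟩
  have hB : B.submatrix id g₁ = (B.submatrix id g₂).submatrix id e := by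
    ext r c
    simp [he]
  rw [hB]
  exact Matrix.permanent_permute_rows e _

end PermanentExpansion


section CharBasics

lemma addChar_map_sum {A M : Type*} [AddCommMonoid A] [CommMonoid M] (ψ : AddChar A M)
    {ι : Type*} (s : Finset ι) (f : ι → A) : ψ (∑ i ∈ s, f i) = ∏ i ∈ s, ψ (f i) := by
  induction s using Finset.cons_induction with
  | empty => simp
  | cons a s ha ih => rw [Finset.sum_cons, Finset.prod_cons, AddChar.map_add_eq_mul, ih]

variable (p : ℕ) [Fact p.Prime]

noncomputable def psi : AddChar (ZMod p) ℂ := AddChar.FiniteField.primitiveChar_to_Complex (ZMod p)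

lemma psi_prim : (psi p).IsPrimitive :=
  AddChar.FiniteField.primitiveChar_to_Complex_isPrimitive (ZMod p)

lemma psi_pow_p (t : ZMod p) : (psi p t) ^ p = 1 := by
  rw [← AddChar.map_nsmul_eq_pow]
  have : (p : ℕ) • t = 0 := by
    simp [nsmul_eq_mul, ZMod.natCast_self]
  rw [this, AddChar.map_zero_eq_one]

lemma psi_norm (t : ZMod p) : ‖psi p t‖ = 1 := by
  have hp : 0 < p := (Fact.out : p.Prime).pos
  have h : ‖psi p t‖ ^ p = 1 := by
    rw [← norm_pow, psi_pow_p, norm_one]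
  rcases lt_trichotomy ‖psi p t‖ 1 with hlt | heq | hgt
  · exfalso
    have := pow_lt_one₀ (norm_nonneg _) hlt hp.ne'
    rw [h] at this; exact lt_irrefl 1 this
  · exact heq
  · exfalso
    have := one_lt_pow₀ hgt hp.ne'
    rw [h] at this; exact lt_irrefl 1 this

lemma psi_sum (b : ZMod p) :
    ∑ a : ZMod p, psi p (a * b) = if b = 0 then (p : ℂ) else 0 := by
  have h := AddChar.sum_mulShift b (psi_prim p)
  rw [ZMod.card p] at h
  rw [h]
  split <;> simp

end CharBasics

section MuHat

variable (p : ℕ) [Fact p.Prime]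

lemma psi_ne_one {t : ZMod p} (ht : t ≠ 0) : psi p t ≠ 1 := by
  intro h
  apply psi_prim p ht
  ext x
  rw [AddChar.mulShift_apply, AddChar.one_apply]
  have hx : ((x.val : ℕ) : ZMod p) = x := ZMod.natCast_rightInverse x
  have : t * x = x.val • t := by rw [nsmul_eq_mul, mul_comm, hx]
  rw [this, AddChar.map_nsmul_eq_pow, h, one_pow]

noncomputable def muhat (μ : ZMod p → ℝ) (c : ZMod p) : ℂ :=
  ∑ z : ZMod p, (μ z : ℂ) * psi p (c * z)

variable (μ : ZMod p → ℝ) (hμ0 : ∀ z, 0 ≤ μ z) (hμ1 : ∑ z, μ z = 1)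

include hμ1 in
lemma muhat_zero : muhat p μ 0 = 1 := by
  have : ∀ z : ZMod p, (μ z : ℂ) * psi p (0 * z) = (μ z : ℂ) := by
    intro z; rw [zero_mul, AddChar.map_zero_eq_one, mul_one]
  rw [muhat, Finset.sum_congr rfl fun z _ => this z, ← Complex.ofReal_sum, hμ1,
    Complex.ofReal_one]

include hμ0 hμ1 in
lemma muhat_norm_le_one (c : ZMod p) : ‖muhat p μ c‖ ≤ 1 := by
  calc ‖muhat p μ c‖ ≤ ∑ z : ZMod p, ‖(μ z : ℂ) * psi p (c * z)‖ := norm_sum_le _ _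
    _ = ∑ z : ZMod p, μ z := by
        refine Finset.sum_congr rfl fun z _ => ?_
        rw [norm_mul, psi_norm, mul_one, Complex.norm_real, Real.norm_eq_abs,
          abs_of_nonneg (hμ0 z)]
    _ = 1 := hμ1

include hμ0 hμ1 in
lemma muhat_norm_lt_one (hμsupp : ∃ a b : ZMod p, a ≠ b ∧ μ a ≠ 0 ∧ μ b ≠ 0)
    {c : ZMod p} (hc : c ≠ 0) : ‖muhat p μ c‖ < 1 := by
  obtain ⟨a, b, hab, ha, hb⟩ := hμsupp
  have ha' : 0 < μ a := lt_of_le_of_ne (hμ0 a) (Ne.symm ha)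
  have hb' : 0 < μ b := lt_of_le_of_ne (hμ0 b) (Ne.symm hb)
  set u : ℂ := psi p (c * a) with hu
  set v : ℂ := psi p (c * b) with hv
  have hun : ‖u‖ = 1 := psi_norm p _
  have hvn : ‖v‖ = 1 := psi_norm p _
  -- u ≠ v
  have hv0 : v ≠ 0 := by
    intro h0; rw [h0, norm_zero] at hvn; norm_num at hvn
  have huv : u ≠ v := by
    intro h
    have hm : psi p (c * (a - b)) * v = u := by
      rw [hu, hv, ← AddChar.map_add_eq_mul]
      congr 1
      ring
    have h1 : psi p (c * (a - b)) = 1 := by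
      apply mul_right_cancel₀ hv0
      rw [hm, h, one_mul]
    exact psi_ne_one p (mul_ne_zero hc (sub_ne_zero.mpr hab)) h1
  -- key strict triangle
  have hre : (u * (starRingEnd ℂ) v).re < 1 := by
    have h1 : ‖u * (starRingEnd ℂ) v‖ = 1 := by
      rw [norm_mul, hun, RCLike.norm_conj, hvn, one_mul]
    have hle : (u * (starRingEnd ℂ) v).re ≤ 1 := by
      calc (u * (starRingEnd ℂ) v).re ≤ ‖u * (starRingEnd ℂ) v‖ := Complex.re_le_norm _
        _ = 1 := h1
    rcases lt_or_eq_of_le hle with h | h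
    · exact h
    · exfalso
      apply huv
      have him : (u * (starRingEnd ℂ) v).im = 0 := by
        have := Complex.sq_norm (u * (starRingEnd ℂ) v)
        rw [h1] at this
        have h2 := Complex.normSq_apply (u * (starRingEnd ℂ) v)
        nlinarith [this, h2, h]
      have hz : u * (starRingEnd ℂ) v = 1 := by
        apply Complex.ext <;> simp [h, him]
      -- deduce u = v
      have hv0 : v ≠ 0 := by
        intro h0; rw [h0, norm_zero] at hvn; norm_num at hvn
      have h3 : u * ((starRingEnd ℂ) v * v) = v := by
        rw [← mul_assoc, hz, one_mul]
      have h4 : ((starRingEnd ℂ) v) * v = 1 := by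
        rw [mul_comm, Complex.mul_conj]
        norm_cast
        rw [Complex.normSq_eq_norm_sq, hvn]
        norm_num
      rwa [h4, mul_one] at h3
  have key : ‖(μ a : ℂ) * u + (μ b : ℂ) * v‖ < μ a + μ b := by
    have hsq : ‖(μ a : ℂ) * u + (μ b : ℂ) * v‖ ^ 2 < (μ a + μ b) ^ 2 := by
      rw [Complex.sq_norm, Complex.normSq_add]
      have e1 : Complex.normSq ((μ a : ℂ) * u) = μ a ^ 2 := by
        rw [Complex.normSq_mul, Complex.normSq_ofReal,
          show Complex.normSq u = 1 by
            rw [Complex.normSq_eq_norm_sq, hun]; norm_num]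
        ring
      have e2 : Complex.normSq ((μ b : ℂ) * v) = μ b ^ 2 := by
        rw [Complex.normSq_mul, Complex.normSq_ofReal,
          show Complex.normSq v = 1 by
            rw [Complex.normSq_eq_norm_sq, hvn]; norm_num]
        ring
      have e3 : ((μ a : ℂ) * u * (starRingEnd ℂ) ((μ b : ℂ) * v)).re
          = μ a * μ b * (u * (starRingEnd ℂ) v).re := by
        rw [map_mul, Complex.conj_ofReal]
        have : (μ a : ℂ) * u * ((μ b : ℂ) * (starRingEnd ℂ) v)
            = ((μ a * μ b : ℝ) : ℂ) * (u * (starRingEnd ℂ) v) := by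
          push_cast; ring
        rw [this, Complex.re_ofReal_mul]
      rw [e1, e2, e3]
      have hx := mul_lt_mul_of_pos_left hre (mul_pos ha' hb')
      nlinarith [hx]
    have hnn : (0:ℝ) ≤ μ a + μ b := by positivity
    exact lt_of_pow_lt_pow_left₀ 2 hnn hsq
  -- split the sum
  set f : ZMod p → ℂ := fun z => (μ z : ℂ) * psi p (c * z) with hf
  have hbmem : b ∈ (Finset.univ : Finset (ZMod p)).erase a :=
    Finset.mem_erase.mpr ⟨Ne.symm hab, Finset.mem_univ b⟩
  have hsplit : muhat p μ c
      = ((μ a : ℂ) * u + (μ b : ℂ) * v) + ∑ z ∈ ((Finset.univ.erase a).erase b), f z := by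
    rw [muhat, ← Finset.add_sum_erase _ f (Finset.mem_univ a),
      ← Finset.add_sum_erase _ f hbmem]
    rw [hu, hv, hf]
    ring
  have hrest : ‖∑ z ∈ ((Finset.univ.erase a).erase b), f z‖
      ≤ ∑ z ∈ ((Finset.univ.erase a).erase b), μ z := by
    refine (norm_sum_le _ _).trans ?_
    refine Finset.sum_le_sum fun z _ => ?_
    rw [hf]
    simp only []
    rw [norm_mul, psi_norm, mul_one, Complex.norm_real, Real.norm_eq_abs,
      abs_of_nonneg (hμ0 z)]
  have hsumsplit : μ a + μ b + ∑ z ∈ ((Finset.univ.erase a).erase b), μ z = 1 := by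
    rw [add_assoc, Finset.add_sum_erase _ μ hbmem, Finset.add_sum_erase _ μ (Finset.mem_univ a)]
    exact hμ1
  calc ‖muhat p μ c‖
      ≤ ‖(μ a : ℂ) * u + (μ b : ℂ) * v‖ + ‖∑ z ∈ ((Finset.univ.erase a).erase b), f z‖ := by
        rw [hsplit]; exact norm_add_le _ _
    _ < (μ a + μ b) + ∑ z ∈ ((Finset.univ.erase a).erase b), μ z := by
        apply add_lt_add_of_lt_of_le key hrest
    _ = 1 := hsumsplit

end MuHat

theorem core_prob_bound (p : ℕ) [Fact p.Prime] (μ : ZMod p → ℝ) (hμ0 : ∀ z, 0 ≤ μ z)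
    (hμ1 : ∑ z, μ z = 1)
    (ρ : ℝ) (hρ0 : 0 ≤ ρ) (hρ1 : ρ ≤ 1)
    (hρ : ∀ c : ZMod p, c ≠ 0 → ‖muhat p μ c‖ ≤ ρ)
    {n s r : ℕ} (u : Fin s → Fin n → ZMod p)
    (hsupp : ∀ a : Fin s → ZMod p, a ≠ 0 →
      ∃ T : Finset (Fin n), r ≤ T.card ∧ ∀ i ∈ T, (∑ j, a j * u j i) ≠ 0) :
    ∑ x ∈ Finset.univ.filter (fun x : Fin n → ZMod p => ∀ j, ∑ i, u j i * x i = 0),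
        ∏ i, μ (x i)
      ≤ ((p : ℝ))⁻¹ ^ s + ρ ^ r := by
  have hp : 0 < p := (Fact.out : p.Prime).pos
  set PR : ℝ := ∑ x ∈ Finset.univ.filter (fun x : Fin n → ZMod p => ∀ j, ∑ i, u j i * x i = 0),
      ∏ i, μ (x i) with hPR
  have hPRnn : 0 ≤ PR := by
    apply Finset.sum_nonneg
    intro x _
    exact Finset.prod_nonneg fun i _ => hμ0 (x i)
  -- indicator expansion
  have hind : ∀ y : Fin s → ZMod p,
      ∑ a : Fin s → ZMod p, psi p (∑ j, a j * y j)
        = if (∀ j, y j = 0) then ((p : ℂ)) ^ s else 0 := by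
    intro y
    rw [Finset.sum_congr rfl fun (a : Fin s → ZMod p) _ =>
      addChar_map_sum (psi p) Finset.univ (fun j => a j * y j)]
    rw [← Fintype.prod_sum (fun j (c : ZMod p) => psi p (c * y j))]
    rw [Finset.prod_congr rfl fun j _ => psi_sum p (y j)]
    by_cases hy : ∀ j, y j = 0
    · rw [if_pos hy, Finset.prod_congr rfl fun j _ => if_pos (hy j), Finset.prod_const]
      simp
    · rw [if_neg hy]
      push_neg at hy
      obtain ⟨j0, hj0⟩ := hy
      exact Finset.prod_eq_zero (Finset.mem_univ j0) (if_neg hj0)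
  -- product factorization
  have hfact : ∀ v : Fin n → ZMod p,
      ∑ x : Fin n → ZMod p, ((∏ i, μ (x i) : ℝ) : ℂ) * psi p (∑ i, v i * x i)
        = ∏ i, muhat p μ (v i) := by
    intro v
    rw [show (∏ i, muhat p μ (v i))
        = ∏ i, ∑ z : ZMod p, ((μ z : ℂ) * psi p (v i * z)) from rfl]
    rw [Fintype.prod_sum (fun i (z : ZMod p) => (μ z : ℂ) * psi p (v i * z))]
    refine Finset.sum_congr rfl fun x _ => ?_
    rw [Finset.prod_mul_distrib, ← addChar_map_sum (psi p) Finset.univ (fun i => v i * x i),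
      Complex.ofReal_prod]
  -- main complex identity
  have hmain : ((p : ℂ)) ^ s * (PR : ℂ)
      = ∑ a : Fin s → ZMod p, ∏ i, muhat p μ (∑ j, a j * u j i) := by
    have h1 : (PR : ℂ) = ∑ x : Fin n → ZMod p,
        ((∏ i, μ (x i) : ℝ) : ℂ) * (if (∀ j, ∑ i, u j i * x i = 0) then 1 else 0) := by
      rw [hPR, Finset.sum_filter, Complex.ofReal_sum]
      refine Finset.sum_congr rfl fun x _ => ?_
      split <;> simp
    rw [h1, Finset.mul_sum]
    have h2 : ∀ x : Fin n → ZMod p,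
        ((p : ℂ)) ^ s * (((∏ i, μ (x i) : ℝ) : ℂ) * (if (∀ j, ∑ i, u j i * x i = 0) then 1 else 0))
        = ∑ a : Fin s → ZMod p, ((∏ i, μ (x i) : ℝ) : ℂ)
            * psi p (∑ i, (∑ j, a j * u j i) * x i) := by
      intro x
      have h3 : ∀ a : Fin s → ZMod p,
          (∑ j, a j * (∑ i, u j i * x i)) = ∑ i, (∑ j, a j * u j i) * x i := by
        intro a
        simp_rw [Finset.mul_sum, Finset.sum_mul, mul_assoc]
        rw [Finset.sum_comm]
      have h4 : (∑ a : Fin s → ZMod p, ((∏ i, μ (x i) : ℝ) : ℂ)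
            * psi p (∑ i, (∑ j, a j * u j i) * x i))
          = ((∏ i, μ (x i) : ℝ) : ℂ)
            * ∑ a : Fin s → ZMod p, psi p (∑ j, a j * (∑ i, u j i * x i)) := by
        rw [Finset.mul_sum]
        refine Finset.sum_congr rfl fun a _ => ?_
        rw [h3 a]
      rw [h4, hind (fun j => ∑ i, u j i * x i)]
      by_cases hc : ∀ j, ∑ i, u j i * x i = 0
      · rw [if_pos hc, if_pos hc]
        ring
      · rw [if_neg hc, if_neg hc]
        ring
    rw [Finset.sum_congr rfl fun x _ => h2 x, Finset.sum_comm]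
    refine Finset.sum_congr rfl fun a _ => hfact _
  -- norm bound on RHS
  have hbound : ‖∑ a : Fin s → ZMod p, ∏ i, muhat p μ (∑ j, a j * u j i)‖
      ≤ 1 + ((p : ℝ) ^ s - 1) * ρ ^ r := by
    have h0mem : (0 : Fin s → ZMod p) ∈ (Finset.univ : Finset (Fin s → ZMod p)) :=
      Finset.mem_univ _
    rw [← Finset.add_sum_erase _ _ h0mem]
    have hzv : (∏ i : Fin n, muhat p μ (∑ j, (0 : Fin s → ZMod p) j * u j i)) = 1 := by
      have hz : ∀ i : Fin n, muhat p μ (∑ j, (0 : Fin s → ZMod p) j * u j i) = 1 := by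
        intro i
        rw [show (∑ j, (0 : Fin s → ZMod p) j * u j i) = (0 : ZMod p) by simp,
          muhat_zero p μ hμ1]
      rw [Finset.prod_congr rfl fun i _ => hz i]
      simp
    refine (norm_add_le _ _).trans ?_
    rw [hzv, norm_one]
    gcongr
    have hterm : ∀ a : Fin s → ZMod p, a ≠ 0 →
        ‖∏ i, muhat p μ (∑ j, a j * u j i)‖ ≤ ρ ^ r := by
      intro a ha
      obtain ⟨T, hTcard, hT⟩ := hsupp a ha
      rw [norm_prod]
      have hsplit : (∏ i, ‖muhat p μ (∑ j, a j * u j i)‖)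
          = (∏ i ∈ Finset.univ \ T, ‖muhat p μ (∑ j, a j * u j i)‖)
            * ∏ i ∈ T, ‖muhat p μ (∑ j, a j * u j i)‖ := by
        rw [Finset.prod_sdiff (Finset.subset_univ T)]
      rw [hsplit]
      have h4 : (∏ i ∈ Finset.univ \ T, ‖muhat p μ (∑ j, a j * u j i)‖) ≤ 1 := by
        apply Finset.prod_le_one
        · intro i _; exact norm_nonneg _
        · intro i _; exact muhat_norm_le_one p μ hμ0 hμ1 _
      have h5 : (∏ i ∈ T, ‖muhat p μ (∑ j, a j * u j i)‖) ≤ ρ ^ T.card := by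
        calc (∏ i ∈ T, ‖muhat p μ (∑ j, a j * u j i)‖) ≤ ∏ _i ∈ T, ρ :=
              Finset.prod_le_prod (fun i _ => norm_nonneg _) (fun i hi => hρ _ (hT i hi))
          _ = ρ ^ T.card := Finset.prod_const ρ
      have h6 : (0:ℝ) ≤ ∏ i ∈ T, ‖muhat p μ (∑ j, a j * u j i)‖ :=
        Finset.prod_nonneg fun i _ => norm_nonneg _
      calc (∏ i ∈ Finset.univ \ T, ‖muhat p μ (∑ j, a j * u j i)‖)
            * ∏ i ∈ T, ‖muhat p μ (∑ j, a j * u j i)‖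
          ≤ 1 * (ρ ^ T.card) := mul_le_mul h4 h5 h6 zero_le_one
        _ = ρ ^ T.card := one_mul _
        _ ≤ ρ ^ r := pow_le_pow_of_le_one hρ0 hρ1 hTcard
    calc ‖∑ a ∈ Finset.univ.erase (0 : Fin s → ZMod p),
            ∏ i, muhat p μ (∑ j, a j * u j i)‖
        ≤ ∑ a ∈ Finset.univ.erase (0 : Fin s → ZMod p),
            ‖∏ i, muhat p μ (∑ j, a j * u j i)‖ := norm_sum_le _ _
      _ ≤ ∑ _a ∈ Finset.univ.erase (0 : Fin s → ZMod p), ρ ^ r :=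
          Finset.sum_le_sum fun a ha => hterm a (Finset.ne_of_mem_erase ha)
      _ = ((p : ℝ) ^ s - 1) * ρ ^ r := by
          rw [Finset.sum_const, nsmul_eq_mul, Finset.card_erase_of_mem (Finset.mem_univ _),
            Finset.card_univ]
          congr 1
          rw [Fintype.card_fun, ZMod.card, Fintype.card_fin]
          have h7 : 1 ≤ p ^ s := Nat.one_le_pow _ _ hp
          push_cast [h7]
          ring
  -- combine
  have hnorm : ((p : ℝ)) ^ s * PR ≤ 1 + ((p : ℝ) ^ s - 1) * ρ ^ r := by
    have : ‖((p : ℂ)) ^ s * (PR : ℂ)‖ = ((p : ℝ)) ^ s * PR := by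
      rw [norm_mul, norm_pow, Complex.norm_natCast, Complex.norm_real, Real.norm_eq_abs,
        abs_of_nonneg hPRnn]
    rw [← this, hmain]
    exact hbound
  have hps : (0:ℝ) < (p : ℝ) ^ s := by positivity
  have hfin : PR ≤ ((p : ℝ) ^ s)⁻¹ * (1 + ((p : ℝ) ^ s - 1) * ρ ^ r) := by
    rw [← le_div_iff₀' hps] at hnorm
    rw [div_eq_inv_mul] at hnorm
    exact hnorm
  refine hfin.trans ?_
  have hrnn : (0:ℝ) ≤ ρ ^ r := pow_nonneg hρ0 r
  have hp0 : ((p:ℝ)) ≠ 0 := by positivity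
  have h8 : ((p : ℝ) ^ s)⁻¹ * (1 + ((p : ℝ) ^ s - 1) * ρ ^ r)
      = ((p:ℝ))⁻¹ ^ s + ρ ^ r - ((p : ℝ) ^ s)⁻¹ * ρ ^ r := by
    rw [inv_pow]
    field_simp
    ring
  rw [h8]
  have h9 : 0 ≤ ((p : ℝ) ^ s)⁻¹ * ρ ^ r := by positivity
  linarith
theorem spread_system (p : ℕ) [Fact p.Prime] {ι : Type*} [DecidableEq ι]
    {n s r : ℕ} (hs : 1 ≤ s) (S : Finset ι)
    (elt : ι → Fin s → Fin n) (Fm : ι → Fin s → Fin n → ZMod p) (d : ι → ZMod p)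
    (hd : ∀ i ∈ S, d i ≠ 0)
    (hdiag : ∀ i ∈ S, ∀ t t' : Fin s, Fm i t (elt i t') = if t' = t then d i else 0)
    (hcross : ∀ i ∈ S, ∀ i' ∈ S, i ≠ i' → ∀ t t' : Fin s, elt i t ≠ elt i' t')
    (hr : 1 ≤ r) (hk : S.card = r * p ^ (s * s)) :
    ∃ u : Fin s → Fin n → ZMod p,
      (∀ x : Fin n → ZMod p, (∀ i ∈ S, ∀ t : Fin s, ∑ q, Fm i t q * x q = 0) →
        ∀ j, ∑ q, u j q * x q = 0) ∧
      (∀ a : Fin s → ZMod p, a ≠ 0 →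
        ∃ T : Finset (Fin n), r ≤ T.card ∧ ∀ q ∈ T, (∑ j, a j * u j q) ≠ 0) := by
  classical
  have hp : 0 < p := (Fact.out : p.Prime).pos
  -- coefficient space
  set ι' := {i // i ∈ S}
  set ΛT := (Fin s → ι' → Fin s → ZMod p)
  set uu : ΛT → Fin s → Fin n → ZMod p :=
    fun Λ j q => ∑ i : ι', ∑ t, Λ j i t * Fm i.1 t q with huu
  set w₀ : Fin s → Fin s → ZMod p := fun j t => if t = j then 1 else 0 with hw₀
  set φ : ι' → ΛT → (Fin s → Fin s → ZMod p) :=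
    fun i Λ j t => uu Λ j (elt i.1 t) with hφ
  have hadd : ∀ i : ι', ∀ Λ Λ' : ΛT, φ i (Λ + Λ') = φ i Λ + φ i Λ' := by
    intro i Λ Λ'
    funext j t
    simp only [hφ, huu, Pi.add_apply]
    rw [← Finset.sum_add_distrib]
    refine Finset.sum_congr rfl fun i' _ => ?_
    rw [← Finset.sum_add_distrib]
    refine Finset.sum_congr rfl fun t' _ => ?_
    rw [show (Λ + Λ') j i' t' = Λ j i' t' + Λ' j i' t' from rfl, add_mul]
  have hsurj : ∀ i : ι', ∀ w : Fin s → Fin s → ZMod p, ∃ Λ : ΛT, φ i Λ = w := by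
    intro i w
    refine ⟨fun j i' t => if i' = i then (d i.1)⁻¹ * w j t else 0, ?_⟩
    funext j t
    simp only [hφ, huu]
    rw [Finset.sum_eq_single i]
    · rw [Finset.sum_congr rfl (fun t' _ => by
        rw [if_pos rfl, hdiag i.1 i.2 t' t])]
      rw [Finset.sum_congr rfl (fun t' _ => by rw [mul_ite, mul_zero])]
      rw [Finset.sum_ite_eq Finset.univ t (fun t' => (d i.1)⁻¹ * w j t' * d i.1)]
      rw [if_pos (Finset.mem_univ t)]
      field_simp [hd i.1 i.2]
    · intro i'' _ hne
      rw [Finset.sum_congr rfl (fun t' _ => by rw [if_neg hne, zero_mul])]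
      simp
    · intro h; exact absurd (Finset.mem_univ i) h
  -- fibers of φ i all have the same cardinality
  have hfiber : ∀ i : ι', ∀ w : Fin s → Fin s → ZMod p,
      ((Finset.univ : Finset ΛT).filter (fun Λ => φ i Λ = w)).card
        = ((Finset.univ : Finset ΛT).filter (fun Λ => φ i Λ = 0)).card := by
    intro i w
    obtain ⟨Λw, hΛw⟩ := hsurj i w
    apply Finset.card_nbij' (fun Λ => Λ - Λw) (fun Λ => Λ + Λw)
    · intro Λ hΛ
      rw [Finset.mem_coe, Finset.mem_filter] at hΛ ⊢
      refine ⟨Finset.mem_univ _, ?_⟩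
      have : Λ = (Λ - Λw) + Λw := (sub_add_cancel Λ Λw).symm
      rw [this, hadd] at hΛ
      have h2 := hΛ.2
      rw [hΛw] at h2
      have := add_right_cancel (h2.trans (zero_add w).symm)
      exact this
    · intro Λ hΛ
      rw [Finset.mem_coe, Finset.mem_filter] at hΛ ⊢
      refine ⟨Finset.mem_univ _, ?_⟩
      rw [hadd, hΛ.2, hΛw, zero_add]
    · intro Λ _; exact sub_add_cancel Λ Λw
    · intro Λ _; exact add_sub_cancel_right Λ Λw
  have hcount : ∀ i : ι',
      ((Finset.univ : Finset ΛT).filter (fun Λ => φ i Λ = w₀)).card * p ^ (s * s)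
        = Fintype.card ΛT := by
    intro i
    have hpart : ∑ w : Fin s → Fin s → ZMod p,
        ((Finset.univ : Finset ΛT).filter (fun Λ => φ i Λ = w)).card
          = Fintype.card ΛT := by
      rw [← Finset.card_univ]
      exact (Finset.card_eq_sum_card_fiberwise (fun Λ _ => Finset.mem_univ (φ i Λ))).symm
    rw [← hpart, Finset.sum_congr rfl (fun w _ => (hfiber i w).trans (hfiber i w₀).symm)]
    rw [Finset.sum_const, Finset.card_univ, smul_eq_mul]
    rw [mul_comm]
    congr 1
    rw [Fintype.card_fun, Fintype.card_fun, ZMod.card, Fintype.card_fin]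
    rw [← pow_mul]
  -- double counting / pigeonhole
  have hpigeon : ∃ Λ : ΛT, r ≤ (S.attach.filter (fun i => φ i Λ = w₀)).card := by
    by_contra hcon
    push_neg at hcon
    have hsum : ∑ Λ : ΛT, (S.attach.filter (fun i => φ i Λ = w₀)).card
        = ∑ i ∈ S.attach, ((Finset.univ : Finset ΛT).filter (fun Λ => φ i Λ = w₀)).card := by
      simp_rw [Finset.card_filter]
      rw [Finset.sum_comm]
    have hT0 : 0 < Fintype.card ΛT := Fintype.card_pos
    have hub : ∑ Λ : ΛT, (S.attach.filter (fun i => φ i Λ = w₀)).card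
        ≤ (r - 1) * Fintype.card ΛT := by
      calc ∑ Λ : ΛT, (S.attach.filter (fun i => φ i Λ = w₀)).card
          ≤ ∑ _Λ : ΛT, (r - 1) := Finset.sum_le_sum (fun Λ _ => by
            have := hcon Λ; omega)
        _ = (r - 1) * Fintype.card ΛT := by
            rw [Finset.sum_const, Finset.card_univ, smul_eq_mul, mul_comm]
    have hlb : (∑ i ∈ S.attach, ((Finset.univ : Finset ΛT).filter (fun Λ => φ i Λ = w₀)).card)
          * p ^ (s * s) = r * p ^ (s * s) * Fintype.card ΛT := by
      rw [Finset.sum_mul]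
      rw [Finset.sum_congr rfl (fun i _ => hcount i)]
      rw [Finset.sum_const, Finset.card_attach, hk, smul_eq_mul]
    have hcontr : r * p ^ (s * s) * Fintype.card ΛT
        ≤ (r - 1) * Fintype.card ΛT * p ^ (s * s) := by
      rw [← hlb, ← hsum]
      exact Nat.mul_le_mul_right _ hub
    have hpp : 0 < p ^ (s * s) := Nat.pos_of_ne_zero (pow_ne_zero _ hp.ne')
    have hpos : 0 < p ^ (s * s) * Fintype.card ΛT := Nat.mul_pos hpp hT0
    have h1 : r * (p ^ (s * s) * Fintype.card ΛT) ≤ (r - 1) * (p ^ (s * s) * Fintype.card ΛT) := by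
      calc r * (p ^ (s * s) * Fintype.card ΛT) = r * p ^ (s * s) * Fintype.card ΛT := by ring
        _ ≤ (r - 1) * Fintype.card ΛT * p ^ (s * s) := hcontr
        _ = (r - 1) * (p ^ (s * s) * Fintype.card ΛT) := by ring
    have h2 : r ≤ r - 1 := Nat.le_of_mul_le_mul_right h1 hpos
    omega
  -- construct the witness
  obtain ⟨Λ0, hΛ0⟩ := hpigeon
  refine ⟨uu Λ0, ?_, ?_⟩
  · intro x hx j
    calc ∑ q, uu Λ0 j q * x q
        = ∑ q, ∑ i : ι', ∑ t, Λ0 j i t * Fm i.1 t q * x q := by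
          refine Finset.sum_congr rfl fun q _ => ?_
          rw [huu]
          rw [Finset.sum_mul]
          refine Finset.sum_congr rfl fun i _ => ?_
          rw [Finset.sum_mul]
      _ = ∑ i : ι', ∑ q, ∑ t, Λ0 j i t * Fm i.1 t q * x q := Finset.sum_comm
      _ = ∑ i : ι', ∑ t, ∑ q, Λ0 j i t * Fm i.1 t q * x q := by
          refine Finset.sum_congr rfl fun i _ => ?_
          exact Finset.sum_comm
      _ = ∑ i : ι', ∑ t, Λ0 j i t * ∑ q, Fm i.1 t q * x q := by
          refine Finset.sum_congr rfl fun i _ => ?_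
          refine Finset.sum_congr rfl fun t _ => ?_
          rw [Finset.mul_sum]
          refine Finset.sum_congr rfl fun q _ => ?_
          ring
      _ = 0 := by
          refine Finset.sum_eq_zero fun i _ => ?_
          refine Finset.sum_eq_zero fun t _ => ?_
          rw [hx i.1 i.2 t, mul_zero]
  · intro a ha
    obtain ⟨t₀, ht₀⟩ := Function.ne_iff.mp ha
    refine ⟨(S.attach.filter (fun i => φ i Λ0 = w₀)).image (fun i => elt i.1 t₀), ?_, ?_⟩
    · rw [Finset.card_image_of_injOn]
      · exact hΛ0
      · intro i hi i' hi' hne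
        by_contra hcc
        have : i.1 ≠ i'.1 := fun h => hcc (Subtype.ext h)
        exact hcross i.1 i.2 i'.1 i'.2 this t₀ t₀ hne
    · intro q hq
      rw [Finset.mem_image] at hq
      obtain ⟨i, hi, hqe⟩ := hq
      rw [Finset.mem_filter] at hi
      have hgood := hi.2
      have hval : ∀ j, uu Λ0 j q = if t₀ = j then 1 else 0 := by
        intro j
        rw [← hqe]
        have := congrFun (congrFun hgood j) t₀
        exact this
      rw [Finset.sum_congr rfl (fun j _ => by rw [hval j])]
      have : ∀ j : Fin s, (a j * if t₀ = j then (1 : ZMod p) else 0)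
          = if t₀ = j then a j else 0 := by
        intro j; split <;> ring
      rw [Finset.sum_congr rfl (fun j _ => this j), Finset.sum_ite_eq]
      rw [if_pos (Finset.mem_univ t₀)]
      exact ht₀
section Bridge

variable {p : ℕ} [Fact p.Prime] {n s : ℕ}

noncomputable def pB (B : Matrix (Fin (n - s)) (Fin n) (ZMod p)) (K : Finset (Fin n)) : ZMod p :=
  if h : (Kᶜ : Finset (Fin n)).card = n - s then
    (B.submatrix id (fun q => (Kᶜ.orderEmbOfFin h q))).permanent else 0

noncomputable def fvec (B : Matrix (Fin (n - s)) (Fin n) (ZMod p)) (J : Finset (Fin n)) :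
    Fin n → ZMod p :=
  fun j => if j ∈ J then 0 else pB B (insert j J)

noncomputable def pB' (B : Matrix (Fin (n - s)) (Fin n) (ZMod p)) (x : Fin n → ZMod p)
    (J : Finset (Fin n)) : ZMod p :=
  if h : (Jᶜ : Finset (Fin n)).card = n - s + 1 then
    ((Matrix.of (Fin.snoc (fun i => B i) x)).submatrix id
      (fun q => (Jᶜ.orderEmbOfFin h q))).permanent
  else 0

lemma image_eq_of_inj_of_subset {m : ℕ} (g : Fin m → Fin n) (hg : Function.Injective g)
    (C : Finset (Fin n)) (hC : C.card = m) (hsub : ∀ q, g q ∈ C) :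
    Set.range g = (C : Set (Fin n)) := by
  have h1 : (Finset.univ.image g).card = m := by
    rw [Finset.card_image_of_injective _ hg, Finset.card_univ, Fintype.card_fin]
  have h2 : Finset.univ.image g ⊆ C := by
    intro j hj
    rw [Finset.mem_image] at hj
    obtain ⟨q, _, rfl⟩ := hj
    exact hsub q
  have h3 : Finset.univ.image g = C := Finset.eq_of_subset_of_card_le h2 (by rw [h1, hC])
  rw [← h3, Finset.coe_image, Finset.coe_univ, Set.image_univ]

lemma pB_ne_of_witness (hns : s ≤ n) (B : Matrix (Fin (n - s)) (Fin n) (ZMod p))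
    (K : Finset (Fin n)) (hK : K.card = s) (g : Fin (n - s) → Fin n)
    (hg : Function.Injective g) (havoid : ∀ q, g q ∉ K)
    (hper : (B.submatrix id g).permanent ≠ 0) : pB B K ≠ 0 := by
  have hcompl : (Kᶜ : Finset (Fin n)).card = n - s := by
    rw [Finset.card_compl, hK, Fintype.card_fin]
  rw [pB, dif_pos hcompl]
  have hrange : Set.range g = ((Kᶜ : Finset (Fin n)) : Set (Fin n)) := by
    apply image_eq_of_inj_of_subset g hg _ hcompl
    intro q
    rw [Finset.mem_compl]
    exact havoid q
  have := my_permanent_submatrix_range_eq B g (fun q => (Kᶜ.orderEmbOfFin hcompl q)) hg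
    (fun a b hab => (Kᶜ.orderEmbOfFin hcompl).injective hab)
    (by rw [hrange, ← Finset.range_orderEmbOfFin Kᶜ hcompl])
  rw [← this]
  exact hper

lemma pB'_eq_dot (hns : s ≤ n) (hs1 : 1 ≤ s) (B : Matrix (Fin (n - s)) (Fin n) (ZMod p))
    (x : Fin n → ZMod p) (J : Finset (Fin n)) (hJ : J.card = s - 1) :
    pB' B x J = ∑ j : Fin n, x j * fvec B J j := by
  have hcard : (Jᶜ : Finset (Fin n)).card = n - s + 1 := by
    rw [Finset.card_compl, hJ, Fintype.card_fin]
    omega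
  set g : Fin (n - s + 1) → Fin n := fun q => (Jᶜ.orderEmbOfFin hcard q) with hgdef
  have hginj : Function.Injective g := fun a b hab => (Jᶜ.orderEmbOfFin hcard).injective hab
  have hgmem : ∀ q, g q ∈ (Jᶜ : Finset (Fin n)) := fun q => Finset.orderEmbOfFin_mem _ _ _
  rw [pB', dif_pos hcard]
  have hsub : (Matrix.of (Fin.snoc (fun i => B i) x)).submatrix id g
      = Matrix.of (Fin.snoc (fun r (q : Fin (n - s + 1)) => B r (g q)) (fun q => x (g q))) := by
    ext r q
    refine Fin.lastCases ?_ (fun r' => ?_) r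
    · show (Fin.snoc (fun i => B i) x : Fin (n-s+1) → Fin n → ZMod p) (Fin.last (n-s)) (g q) = _
      rw [Fin.snoc_last]
      show x (g q) = Matrix.of (Fin.snoc (fun r (q : Fin (n - s + 1)) => B r (g q))
        (fun q => x (g q))) (Fin.last (n-s)) q
      rw [Matrix.of_apply, Fin.snoc_last]
    · show (Fin.snoc (fun i => B i) x : Fin (n-s+1) → Fin n → ZMod p) (Fin.castSucc r') (g q) = _
      rw [Fin.snoc_castSucc]
      show B r' (g q) = Matrix.of (Fin.snoc (fun r (q : Fin (n - s + 1)) => B r (g q))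
        (fun q => x (g q))) (Fin.castSucc r') q
      rw [Matrix.of_apply, Fin.snoc_castSucc]
  rw [hsub, my_permanent_expand_snoc]
  -- each minor equals pB of the inserted set
  have hminor : ∀ q : Fin (n - s + 1),
      (Matrix.of (fun r c => B r (g (q.succAbove c)))).permanent = pB B (insert (g q) J) := by
    intro q
    have hnotmem : g q ∉ J := by
      have := hgmem q
      rw [Finset.mem_compl] at this
      exact this
    have hins : ((insert (g q) J)ᶜ : Finset (Fin n)).card = n - s := by
      rw [Finset.card_compl, Finset.card_insert_of_notMem hnotmem, hJ, Fintype.card_fin]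
      omega
    rw [pB, dif_pos hins]
    have hcomp : Function.Injective (g ∘ q.succAbove) :=
      hginj.comp (Fin.succAbove_right_injective)
    apply my_permanent_submatrix_range_eq B (g ∘ q.succAbove) _ hcomp
      (fun a b hab => ((insert (g q) J)ᶜ.orderEmbOfFin hins).injective hab)
    rw [Finset.range_orderEmbOfFin]
    apply image_eq_of_inj_of_subset _ hcomp _ hins
    intro c
    rw [Finset.compl_insert, Finset.mem_erase]
    constructor
    · intro h
      exact (Fin.succAbove_ne q c) (hginj h)
    · exact hgmem _
  rw [Finset.sum_congr rfl (fun q _ => by rw [hminor q])]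
  -- reindex the sum
  have hbij : ∑ q : Fin (n - s + 1), x (g q) * pB B (insert (g q) J)
      = ∑ j ∈ (Jᶜ : Finset (Fin n)), x j * pB B (insert j J) := by
    apply Finset.sum_bij (fun q _ => g q)
    · intro q _; exact hgmem q
    · intro a _ b _ hab; exact hginj hab
    · intro j hj
      have : j ∈ Set.range g := by
        rw [image_eq_of_inj_of_subset g hginj Jᶜ hcard hgmem]
        exact hj
      obtain ⟨q, hq⟩ := this
      exact ⟨q, Finset.mem_univ q, hq⟩
    · intro q _; rfl
  rw [hbij]
  have hstep : ∑ j ∈ (Jᶜ : Finset (Fin n)), x j * pB B (insert j J)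
      = ∑ j ∈ (Jᶜ : Finset (Fin n)), x j * fvec B J j := by
    refine Finset.sum_congr rfl fun j hj => ?_
    rw [Finset.mem_compl] at hj
    simp only [fvec, if_neg hj]
  rw [hstep]
  apply Finset.sum_subset (Finset.subset_univ (Jᶜ : Finset (Fin n)))
  intro j _ hj
  rw [Finset.mem_compl, not_not] at hj
  simp only [fvec, if_pos hj, mul_zero]

lemma fvec_diag (B : Matrix (Fin (n - s)) (Fin n) (ZMod p)) (I : Finset (Fin n))
    {c c' : Fin n} (hc : c ∈ I) (hc' : c' ∈ I) :
    fvec B (I.erase c) c' = if c' = c then pB B I else 0 := by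
  by_cases h : c' = c
  · subst h
    rw [if_pos rfl, fvec, if_neg (Finset.notMem_erase c' I), Finset.insert_erase hc]
  · rw [if_neg h, fvec, if_pos (Finset.mem_erase.mpr ⟨h, hc'⟩)]

end Bridge
section ChooseRatio

lemma pow_one_add_le (x : ℝ) (h0 : 0 ≤ x) (h1 : x ≤ 1) :
    ∀ e : ℕ, (1 + x) ^ e ≤ 1 + (2 ^ e - 1) * x := by
  intro e
  induction e with
  | zero => norm_num
  | succ e ih =>
    have h2 : (1:ℝ) ≤ 2 ^ e := one_le_pow₀ (by norm_num)
    have hx2 : x ^ 2 ≤ x := by nlinarith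
    calc (1 + x) ^ (e + 1) = (1 + x) ^ e * (1 + x) := by ring
      _ ≤ (1 + (2 ^ e - 1) * x) * (1 + x) := by
          apply mul_le_mul_of_nonneg_right ih
          linarith
      _ = 1 + (2 ^ e) * x + (2 ^ e - 1) * x ^ 2 := by ring
      _ ≤ 1 + (2 ^ e) * x + (2 ^ e - 1) * x := by nlinarith
      _ ≤ 1 + (2 ^ (e + 1) - 1) * x := by
          have : (2:ℝ) ^ (e+1) = 2 * 2 ^ e := by ring
          nlinarith

lemma choose_ratio_bound (m k : ℕ) (hkm : k ≤ m) :
    ∀ e : ℕ, (((m + e).choose k : ℕ) : ℝ)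
      ≤ (((m:ℝ) + 1) / (((m + 1 - k : ℕ)) : ℝ)) ^ e * ((m.choose k : ℕ) : ℝ) := by
  have hd : (0:ℝ) < ((m + 1 - k : ℕ) : ℝ) := by
    have : 1 ≤ m + 1 - k := by omega
    exact_mod_cast Nat.lt_of_lt_of_le Nat.zero_lt_one this
  have hQ : (0:ℝ) < ((m:ℝ) + 1) / (((m + 1 - k : ℕ)) : ℝ) := by positivity
  intro e
  induction e with
  | zero => simp
  | succ e ih =>
    have hid := Nat.choose_mul_succ_eq (m + e) k
    -- (m+e).choose k * (m+e+1) = (m+e+1).choose k * (m+e+1-k)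
    have hd2 : (0:ℝ) < ((m + e + 1 - k : ℕ) : ℝ) := by
      have : 1 ≤ m + e + 1 - k := by omega
      exact_mod_cast Nat.lt_of_lt_of_le Nat.zero_lt_one this
    have hidR : (((m + e).choose k : ℕ) : ℝ) * ((m:ℝ) + e + 1)
        = (((m + e + 1).choose k : ℕ) : ℝ) * ((m + e + 1 - k : ℕ) : ℝ) := by
      have := congrArg (fun t : ℕ => (t : ℝ)) hid
      push_cast at this ⊢
      convert this using 2 <;> push_cast <;> ring
    have hstep : (((m + e + 1).choose k : ℕ) : ℝ)
        = (((m + e).choose k : ℕ) : ℝ) * (((m:ℝ) + e + 1) / ((m + e + 1 - k : ℕ) : ℝ)) := by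
      rw [mul_div_assoc'] at *
      rw [eq_div_iff (ne_of_gt hd2)]
      linarith [hidR]
    have hmono : ((m:ℝ) + e + 1) / ((m + e + 1 - k : ℕ) : ℝ)
        ≤ ((m:ℝ) + 1) / ((m + 1 - k : ℕ) : ℝ) := by
      rw [div_le_div_iff₀ hd2 hd]
      have hc1 : ((m + e + 1 - k : ℕ) : ℝ) = (m:ℝ) + e + 1 - k := by
        have : k ≤ m + e + 1 := by omega
        push_cast [Nat.cast_sub this]
        ring
      have hc2 : ((m + 1 - k : ℕ) : ℝ) = (m:ℝ) + 1 - k := by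
        have : k ≤ m + 1 := by omega
        push_cast [Nat.cast_sub this]
        ring
      rw [hc1, hc2]
      have he : (0:ℝ) ≤ (e:ℝ) := Nat.cast_nonneg e
      have hk : (0:ℝ) ≤ (k:ℝ) := Nat.cast_nonneg k
      nlinarith
    have hnn : (0:ℝ) ≤ (((m + e).choose k : ℕ) : ℝ) := Nat.cast_nonneg _
    calc (((m + e + 1).choose k : ℕ) : ℝ)
        = (((m + e).choose k : ℕ) : ℝ) * (((m:ℝ) + e + 1) / ((m + e + 1 - k : ℕ) : ℝ)) := hstep
      _ ≤ ((((m:ℝ) + 1) / (((m + 1 - k : ℕ)) : ℝ)) ^ e * ((m.choose k : ℕ) : ℝ))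
            * (((m:ℝ) + 1) / ((m + 1 - k : ℕ) : ℝ)) := by
          apply mul_le_mul ih hmono (by positivity) (by positivity)
      _ = (((m:ℝ) + 1) / (((m + 1 - k : ℕ)) : ℝ)) ^ (e + 1) * ((m.choose k : ℕ) : ℝ) := by
          ring
    
lemma exists_good_L (k ℓ : ℕ) (hk : 1 ≤ k) (hℓ : 1 ≤ ℓ) (β γt : ℝ) (hβ : 0 < β) (hγ : β < γt) :
    ∃ L : ℕ, k + ℓ ≤ L ∧ ((L.choose k : ℕ) : ℝ) * β ≤ (((L - ℓ + 1).choose k : ℕ) : ℝ) * γt := by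
  set e := ℓ - 1 with he
  set δ := γt / β with hδ
  have hδ1 : 1 < δ := (one_lt_div hβ).mpr hγ
  obtain ⟨M0, hM0⟩ := exists_nat_gt (max ((k:ℝ) * 2 ^ e / (δ - 1)) (k:ℝ))
  have hM0k : (k:ℝ) < M0 := lt_of_le_of_lt (le_max_right _ _) hM0
  have hM0δ : (k:ℝ) * 2 ^ e / (δ - 1) < M0 := lt_of_le_of_lt (le_max_left _ _) hM0
  have hM0knat : k ≤ M0 := by exact_mod_cast hM0k.le
  set m := k + M0 with hm
  refine ⟨m + e, by omega, ?_⟩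
  have hLm : m + e - ℓ + 1 = m := by omega
  rw [hLm]
  have hkm : k ≤ m := by omega
  have hsub : (m + 1 - k : ℕ) = M0 + 1 := by omega
  have hQ : ((m:ℝ) + 1) / ((m + 1 - k : ℕ) : ℝ) = 1 + (k:ℝ) / ((M0:ℝ) + 1) := by
    rw [hsub]
    push_cast
    field_simp
    rw [hm]
    push_cast
    ring
  have hx0 : (0:ℝ) ≤ (k:ℝ) / ((M0:ℝ) + 1) := by positivity
  have hx1 : (k:ℝ) / ((M0:ℝ) + 1) ≤ 1 := by
    rw [div_le_one (by positivity)]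
    linarith
  have hQe : (((m:ℝ) + 1) / ((m + 1 - k : ℕ) : ℝ)) ^ e ≤ δ := by
    rw [hQ]
    refine (pow_one_add_le _ hx0 hx1 e).trans ?_
    have h2e : (0:ℝ) < 2 ^ e := by positivity
    have hband : (2:ℝ) ^ e * ((k:ℝ) / ((M0:ℝ) + 1)) ≤ δ - 1 := by
      have hδpos : (0:ℝ) < δ - 1 := sub_pos.mpr hδ1
      have h1 : (k:ℝ) * 2 ^ e < (M0:ℝ) * (δ - 1) := (div_lt_iff₀ hδpos).mp hM0δ
      rw [mul_comm, div_mul_eq_mul_div, div_le_iff₀ (by positivity : (0:ℝ) < (M0:ℝ) + 1)]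
      nlinarith
    have hband2 : ((2:ℝ) ^ e - 1) * ((k:ℝ) / ((M0:ℝ) + 1)) ≤ (2:ℝ) ^ e * ((k:ℝ) / ((M0:ℝ) + 1)) := by
      nlinarith
    linarith
  have hratio := choose_ratio_bound m k hkm e
  have hcnn : (0:ℝ) ≤ ((m.choose k : ℕ) : ℝ) := Nat.cast_nonneg _
  calc (((m + e).choose k : ℕ) : ℝ) * β
      ≤ ((((m:ℝ) + 1) / ((m + 1 - k : ℕ) : ℝ)) ^ e * ((m.choose k : ℕ) : ℝ)) * β := by
        apply mul_le_mul_of_nonneg_right hratio hβ.le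
    _ ≤ (δ * ((m.choose k : ℕ) : ℝ)) * β := by
        apply mul_le_mul_of_nonneg_right _ hβ.le
        apply mul_le_mul_of_nonneg_right hQe hcnn
    _ = ((m.choose k : ℕ) : ℝ) * γt := by
        rw [hδ]
        field_simp

end ChooseRatio

/-- One-step growth lemma for general distributions: for a prime `p ≥ 3`, a distribution `μ` on
`F_p` supported on more than one value, `s, ℓ ≥ 1` and `ε > 0`, there are `L, N ∈ ℕ` such that
for all `n ≥ N`: if a fixed `(n-s) × n` matrix `B` over `F_p` has `L` pairwise disjoint size-`s`
column sets whose deletion leaves a matrix with nonzero permanent, then appending a row `x` with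
independent `μ`-distributed entries, with probability at least `1 - p^{-s} - ε` there are `ℓ`
pairwise disjoint size-`(s-1)` column sets whose deletion from the extended matrix leaves an
`(n-s+1) × (n-s+1)` matrix with nonzero permanent. -/
theorem one_step_growth_general (p : ℕ) [Fact p.Prime] (hp3 : 3 ≤ p)
    (μ : ZMod p → ℝ) (hμ0 : ∀ z, 0 ≤ μ z) (hμ1 : ∑ z, μ z = 1)
    (hμsupp : ∃ a b : ZMod p, a ≠ b ∧ μ a ≠ 0 ∧ μ b ≠ 0)
    (s ℓ : ℕ) (hs : 1 ≤ s) (hℓ : 1 ≤ ℓ) (ε : ℝ) (hε : 0 < ε) :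
    ∃ L N : ℕ, ∀ n : ℕ, N ≤ n →
      ∀ B : Matrix (Fin (n - s)) (Fin n) (ZMod p),
        (∃ I : Fin L → Finset (Fin n),
          (∀ i, (I i).card = s) ∧ (∀ i j, i ≠ j → Disjoint (I i) (I j)) ∧
          ∀ i, ∃ g : Fin (n - s) → Fin n, Function.Injective g ∧ (∀ k, g k ∉ I i) ∧
            (B.submatrix id g).permanent ≠ 0) →
        1 - ((p : ℝ))⁻¹ ^ s - ε ≤
          ∑ x ∈ Finset.univ.filter
              (fun x : Fin n → ZMod p =>
                ∃ J : Fin ℓ → Finset (Fin n),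
                  (∀ j, (J j).card = s - 1) ∧ (∀ i j, i ≠ j → Disjoint (J i) (J j)) ∧
                  ∀ j, ∃ g : Fin (n - s + 1) → Fin n, Function.Injective g ∧
                    (∀ k, g k ∉ J j) ∧
                    ((Matrix.of (Fin.snoc (fun i => B i) x)).submatrix id g).permanent ≠ 0),
            ∏ i, μ (x i) := by
  
  classical
  have hp : 0 < p := (Fact.out : p.Prime).pos
  have hone : (1 : ZMod p) ≠ 0 := one_ne_zero
  have hne : ((Finset.univ.erase (0 : ZMod p))).Nonempty :=
    ⟨1, Finset.mem_erase.mpr ⟨hone, Finset.mem_univ 1⟩⟩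
  set ρ : ℝ := (Finset.univ.erase (0 : ZMod p)).sup' hne (fun c => ‖muhat p μ c‖) with hρdef
  have hρle : ∀ c : ZMod p, c ≠ 0 → ‖muhat p μ c‖ ≤ ρ := by
    intro c hc
    rw [hρdef]
    exact Finset.le_sup' (fun c => ‖muhat p μ c‖)
      (Finset.mem_erase.mpr ⟨hc, Finset.mem_univ c⟩)
  have hρ0 : 0 ≤ ρ := le_trans (norm_nonneg _) (hρle 1 hone)
  have hρ1 : ρ < 1 := by
    rw [hρdef, Finset.sup'_lt_iff]
    intro c hc
    exact muhat_norm_lt_one p μ hμ0 hμ1 hμsupp (Finset.mem_erase.mp hc).1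
  obtain ⟨r0, hr0⟩ := exists_pow_lt_of_lt_one (half_pos hε) hρ1
  set r := r0 + 1 with hrdef
  have hr1 : 1 ≤ r := Nat.le_add_left 1 r0
  have hrε : ρ ^ r ≤ ε / 2 :=
    le_trans (pow_le_pow_of_le_one hρ0 hρ1.le (Nat.le_succ r0)) hr0.le
  set k := r * p ^ (s * s) with hkdef
  have hk1 : 1 ≤ k := by
    rw [hkdef]
    have h1 := Nat.pos_of_ne_zero (pow_ne_zero (s * s) hp.ne')
    have h2 : 1 ≤ r := hr1
    exact Nat.one_le_iff_ne_zero.mpr (Nat.mul_ne_zero (by omega) (by omega))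
  set β : ℝ := ((p : ℝ))⁻¹ ^ s + ε / 2 with hβdef
  set γt : ℝ := ((p : ℝ))⁻¹ ^ s + ε with hγdef
  have hβ0 : 0 < β := by
    rw [hβdef]; positivity
  have hβγ : β < γt := by
    rw [hβdef, hγdef]; linarith
  obtain ⟨L, hLge, hLbound⟩ := exists_good_L k ℓ hk1 hℓ β γt hβ0 hβγ
  refine ⟨L, s, ?_⟩
  intro n hn B hypB
  obtain ⟨I, hIcard, hIdisj, hIgood⟩ := hypB
  have hns : s ≤ n := hn
  have hd : ∀ i, pB B (I i) ≠ 0 := by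
    intro i
    obtain ⟨g, hg, hav, hper⟩ := hIgood i
    exact pB_ne_of_witness hns B (I i) (hIcard i) g hg hav hper
  set elt : Fin L → Fin s → Fin n := fun i t => (I i).orderEmbOfFin (hIcard i) t with helt
  have heltmem : ∀ i t, elt i t ∈ I i := fun i t => Finset.orderEmbOfFin_mem _ _ _
  set Fm : Fin L → Fin s → Fin n → ZMod p :=
    fun i t => fvec B ((I i).erase (elt i t)) with hFm
  set Goodb : Fin L → (Fin n → ZMod p) → Prop :=
    fun i x => ∃ t : Fin s, ∑ q, Fm i t q * x q ≠ 0 with hGoodb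
  set W : (Fin n → ZMod p) → ℝ := fun x => ∏ i, μ (x i) with hW
  have hWnn : ∀ x, 0 ≤ W x := fun x => Finset.prod_nonneg fun i _ => hμ0 _
  have hWtot : ∑ x : Fin n → ZMod p, W x = 1 := by
    rw [hW, ← Fintype.prod_sum (fun (_ : Fin n) (z : ZMod p) => μ z),
      Finset.prod_congr rfl fun (i : Fin n) _ => hμ1, Finset.prod_const, one_pow]
  -- Event inclusion
  have hEvent : ∀ x : Fin n → ZMod p,
      ℓ ≤ (Finset.univ.filter (fun i => Goodb i x)).card →
      (∃ J : Fin ℓ → Finset (Fin n),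
        (∀ j, (J j).card = s - 1) ∧ (∀ i j, i ≠ j → Disjoint (J i) (J j)) ∧
        ∀ j, ∃ g : Fin (n - s + 1) → Fin n, Function.Injective g ∧ (∀ k, g k ∉ J j) ∧
          ((Matrix.of (Fin.snoc (fun i => B i) x)).submatrix id g).permanent ≠ 0) := by
    intro x hx
    obtain ⟨G, hGsub, hGcard⟩ := Finset.exists_subset_card_eq hx
    set mp : Fin ℓ → Fin L := fun t => G.orderEmbOfFin hGcard t with hmp
    have hmpmem : ∀ t, mp t ∈ G := fun t => Finset.orderEmbOfFin_mem _ _ _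
    have hmpinj : Function.Injective mp := fun a b hab =>
      (G.orderEmbOfFin hGcard).injective hab
    have hmpgood : ∀ t, Goodb (mp t) x := fun t =>
      (Finset.mem_filter.mp (hGsub (hmpmem t))).2
    have hc : ∀ t : Fin ℓ, ∃ tt : Fin s, ∑ q, Fm (mp t) tt q * x q ≠ 0 := fun t => hmpgood t
    choose ct hct using hc
    refine ⟨fun t => (I (mp t)).erase (elt (mp t) (ct t)), ?_, ?_, ?_⟩
    · intro t
      rw [Finset.card_erase_of_mem (heltmem _ _), hIcard]
    · intro t t' htt
      exact Disjoint.mono (Finset.erase_subset _ _) (Finset.erase_subset _ _)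
        (hIdisj _ _ (fun h => htt (hmpinj h)))
    · intro t
      set J := (I (mp t)).erase (elt (mp t) (ct t)) with hJ
      have hJcard : J.card = s - 1 := by
        rw [hJ, Finset.card_erase_of_mem (heltmem _ _), hIcard]
      have hcard : (Jᶜ : Finset (Fin n)).card = n - s + 1 := by
        rw [Finset.card_compl, hJcard, Fintype.card_fin]
        omega
      refine ⟨fun q => ((Jᶜ : Finset (Fin n)).orderEmbOfFin hcard q),
        (fun a b hab => ((Jᶜ : Finset (Fin n)).orderEmbOfFin hcard).injective hab), ?_, ?_⟩
      · intro q
        have hmem := Finset.orderEmbOfFin_mem (Jᶜ : Finset (Fin n)) hcard q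
        rw [Finset.mem_compl] at hmem
        exact hmem
      · have hpb' : pB' B x J ≠ 0 := by
          rw [pB'_eq_dot hns hs B x J hJcard]
          intro h0
          apply hct t
          have hFmJ : Fm (mp t) (ct t) = fvec B J := by rw [hFm]
          rw [hFmJ]
          calc ∑ q, fvec B J q * x q = ∑ q, x q * fvec B J q :=
                Finset.sum_congr rfl fun q _ => mul_comm _ _
            _ = 0 := h0
        rw [pB', dif_pos hcard] at hpb'
        exact hpb'
  -- per-S bound
  have hperS : ∀ S : Finset (Fin L), S.card = k →
      (∑ x ∈ Finset.univ.filter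
          (fun x : Fin n → ZMod p => ∀ i ∈ S, ∀ t, ∑ q, Fm i t q * x q = 0), W x) ≤ β := by
    intro S hScard
    have hdiag : ∀ i ∈ S, ∀ t t' : Fin s, Fm i t (elt i t')
        = if t' = t then pB B (I i) else 0 := by
      intro i _ t t'
      have h1 : Fm i t (elt i t') = fvec B ((I i).erase (elt i t)) (elt i t') := by rw [hFm]
      rw [h1, fvec_diag B (I i) (heltmem i t) (heltmem i t')]
      by_cases hcase : t' = t
      · subst hcase
        rw [if_pos rfl, if_pos rfl]
      · rw [if_neg hcase, if_neg (fun h => hcase (((I i).orderEmbOfFin (hIcard i)).injective h))]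
    have hcross : ∀ i ∈ S, ∀ i' ∈ S, i ≠ i' → ∀ t t' : Fin s, elt i t ≠ elt i' t' := by
      intro i _ i' _ hne t t' h
      exact (Finset.disjoint_left.mp (hIdisj i i' hne)) (heltmem i t) (h ▸ heltmem i' t')
    obtain ⟨u, huA, huB⟩ := spread_system p hs S elt Fm (fun i => pB B (I i))
      (fun i _ => hd i) hdiag hcross hr1 (hScard.trans hkdef)
    have hsubset' : Finset.univ.filter
          (fun x : Fin n → ZMod p => ∀ i ∈ S, ∀ t, ∑ q, Fm i t q * x q = 0)
        ⊆ Finset.univ.filter (fun x => ∀ j, ∑ q, u j q * x q = 0) := by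
      intro x hx
      rw [Finset.mem_filter] at hx ⊢
      exact ⟨hx.1, huA x hx.2⟩
    calc (∑ x ∈ Finset.univ.filter
          (fun x : Fin n → ZMod p => ∀ i ∈ S, ∀ t, ∑ q, Fm i t q * x q = 0), W x)
        ≤ ∑ x ∈ Finset.univ.filter (fun x => ∀ j, ∑ q, u j q * x q = 0), W x :=
          Finset.sum_le_sum_of_subset_of_nonneg hsubset' (fun x _ _ => hWnn x)
      _ ≤ ((p : ℝ))⁻¹ ^ s + ρ ^ r :=
          core_prob_bound p μ hμ0 hμ1 ρ hρ0 hρ1.le hρle u huB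
      _ ≤ β := by rw [hβdef]; linarith
  -- moment bound
  set m := L - ℓ + 1 with hmdef
  set Bad : (Fin n → ZMod p) → Finset (Fin L) :=
    fun x => Finset.univ.filter (fun i => ¬ Goodb i x) with hBad
  have hkm : k ≤ m := by omega
  have hCm : 0 < m.choose k := Nat.choose_pos hkm
  have hkey : (∑ x ∈ Finset.univ.filter (fun x : Fin n → ZMod p => m ≤ (Bad x).card), W x)
      ≤ γt := by
    have hpt : ∀ x : Fin n → ZMod p, m ≤ (Bad x).card →
        ((m.choose k : ℕ) : ℝ) * W x
          ≤ ∑ S ∈ Finset.univ.powersetCard k,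
              (if ∀ i ∈ S, ¬ Goodb i x then W x else 0) := by
      intro x hx
      have h1 : ((Bad x).powersetCard k)
          ⊆ (Finset.univ.powersetCard k).filter (fun S => ∀ i ∈ S, ¬ Goodb i x) := by
        intro S hS
        rw [Finset.mem_powersetCard] at hS
        rw [Finset.mem_filter, Finset.mem_powersetCard]
        refine ⟨⟨Finset.subset_univ S, hS.2⟩, fun i hi => ?_⟩
        have := hS.1 hi
        rw [hBad, Finset.mem_filter] at this
        exact this.2
      have h2 : m.choose k
          ≤ ((Finset.univ.powersetCard k).filter (fun S => ∀ i ∈ S, ¬ Goodb i x)).card := by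
        calc m.choose k ≤ (Bad x).card.choose k := Nat.choose_le_choose k hx
          _ = ((Bad x).powersetCard k).card := (Finset.card_powersetCard k (Bad x)).symm
          _ ≤ _ := Finset.card_le_card h1
      calc ((m.choose k : ℕ) : ℝ) * W x
          ≤ ((((Finset.univ.powersetCard k).filter
              (fun S => ∀ i ∈ S, ¬ Goodb i x)).card : ℕ) : ℝ) * W x := by
            apply mul_le_mul_of_nonneg_right _ (hWnn x)
            exact_mod_cast h2
        _ = ∑ _S ∈ (Finset.univ.powersetCard k).filter (fun S => ∀ i ∈ S, ¬ Goodb i x), W x := by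
            rw [Finset.sum_const, nsmul_eq_mul]
        _ = ∑ S ∈ Finset.univ.powersetCard k, (if ∀ i ∈ S, ¬ Goodb i x then W x else 0) :=
            Finset.sum_filter _ _
    have hsum1 : ((m.choose k : ℕ) : ℝ)
        * (∑ x ∈ Finset.univ.filter (fun x : Fin n → ZMod p => m ≤ (Bad x).card), W x)
        ≤ ∑ S ∈ Finset.univ.powersetCard k,
            ∑ x ∈ Finset.univ.filter (fun x : Fin n → ZMod p => ∀ i ∈ S, ¬ Goodb i x), W x := by
      rw [Finset.mul_sum]
      calc (∑ x ∈ Finset.univ.filter (fun x : Fin n → ZMod p => m ≤ (Bad x).card),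
              ((m.choose k : ℕ) : ℝ) * W x)
          ≤ ∑ x ∈ Finset.univ.filter (fun x : Fin n → ZMod p => m ≤ (Bad x).card),
              ∑ S ∈ Finset.univ.powersetCard k,
                (if ∀ i ∈ S, ¬ Goodb i x then W x else 0) :=
            Finset.sum_le_sum (fun x hx => hpt x (Finset.mem_filter.mp hx).2)
        _ ≤ ∑ x : Fin n → ZMod p, ∑ S ∈ Finset.univ.powersetCard k,
                (if ∀ i ∈ S, ¬ Goodb i x then W x else 0) := by
            apply Finset.sum_le_sum_of_subset_of_nonneg (Finset.filter_subset _ _)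
            intro x _ _
            apply Finset.sum_nonneg
            intro S _
            split
            · exact hWnn x
            · exact le_refl 0
        _ = ∑ S ∈ Finset.univ.powersetCard k, ∑ x : Fin n → ZMod p,
                (if ∀ i ∈ S, ¬ Goodb i x then W x else 0) := Finset.sum_comm
        _ = ∑ S ∈ Finset.univ.powersetCard k,
              ∑ x ∈ Finset.univ.filter (fun x : Fin n → ZMod p => ∀ i ∈ S, ¬ Goodb i x), W x := by
            refine Finset.sum_congr rfl fun S _ => (Finset.sum_filter _ _).symm
    have hSle : ∀ S ∈ Finset.univ.powersetCard k,
        (∑ x ∈ Finset.univ.filter (fun x : Fin n → ZMod p => ∀ i ∈ S, ¬ Goodb i x), W x) ≤ β := by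
      intro S hS
      have hScard : S.card = k := (Finset.mem_powersetCard.mp hS).2
      have hfilterEq : Finset.univ.filter (fun x : Fin n → ZMod p => ∀ i ∈ S, ¬ Goodb i x)
          = Finset.univ.filter
              (fun x : Fin n → ZMod p => ∀ i ∈ S, ∀ t, ∑ q, Fm i t q * x q = 0) := by
        apply Finset.filter_congr
        intro x _
        constructor
        · intro h i hi t
          have h2 := h i hi
          simp only [hGoodb, not_exists, not_not] at h2
          exact h2 t
        · intro h i hi
          simp only [hGoodb, not_exists, not_not]
          exact fun t => h i hi t
      rw [hfilterEq]
      exact hperS S hScard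
    have hfinal : ((m.choose k : ℕ) : ℝ)
        * (∑ x ∈ Finset.univ.filter (fun x : Fin n → ZMod p => m ≤ (Bad x).card), W x)
        ≤ ((m.choose k : ℕ) : ℝ) * γt := by
      calc ((m.choose k : ℕ) : ℝ)
          * (∑ x ∈ Finset.univ.filter (fun x : Fin n → ZMod p => m ≤ (Bad x).card), W x)
          ≤ ∑ S ∈ Finset.univ.powersetCard k,
              ∑ x ∈ Finset.univ.filter (fun x : Fin n → ZMod p => ∀ i ∈ S, ¬ Goodb i x), W x :=
            hsum1
        _ ≤ ∑ _S ∈ Finset.univ.powersetCard k, β := Finset.sum_le_sum hSle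
        _ = ((L.choose k : ℕ) : ℝ) * β := by
            rw [Finset.sum_const, nsmul_eq_mul, Finset.card_powersetCard, Finset.card_univ,
              Fintype.card_fin]
        _ ≤ (((L - ℓ + 1).choose k : ℕ) : ℝ) * γt := hLbound
        _ = ((m.choose k : ℕ) : ℝ) * γt := by rw [hmdef]
    have hCmR : (0:ℝ) < ((m.choose k : ℕ) : ℝ) := by exact_mod_cast hCm
    exact le_of_mul_le_mul_left hfinal hCmR
  -- final assembly
  have hcardsplit : ∀ x : Fin n → ZMod p,
      (Finset.univ.filter (fun i => Goodb i x)).card + (Bad x).card = L := by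
    intro x
    rw [hBad, Finset.card_filter_add_card_filter_not, Finset.card_univ, Fintype.card_fin]
  have hsplit : (∑ x ∈ Finset.univ.filter
        (fun x : Fin n → ZMod p => ℓ ≤ (Finset.univ.filter (fun i => Goodb i x)).card), W x)
      + (∑ x ∈ Finset.univ.filter
        (fun x : Fin n → ZMod p => ¬ ℓ ≤ (Finset.univ.filter (fun i => Goodb i x)).card), W x)
      = 1 := by
    rw [Finset.sum_filter_add_sum_filter_not, hWtot]
  have hsub2 : Finset.univ.filter
        (fun x : Fin n → ZMod p => ¬ ℓ ≤ (Finset.univ.filter (fun i => Goodb i x)).card)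
      ⊆ Finset.univ.filter (fun x : Fin n → ZMod p => m ≤ (Bad x).card) := by
    intro x hx
    rw [Finset.mem_filter] at hx ⊢
    refine ⟨Finset.mem_univ x, ?_⟩
    have h1 := hcardsplit x
    have h2 := hx.2
    omega
  have hstep1 : (∑ x ∈ Finset.univ.filter
        (fun x : Fin n → ZMod p => ¬ ℓ ≤ (Finset.univ.filter (fun i => Goodb i x)).card), W x)
      ≤ γt := by
    refine le_trans (Finset.sum_le_sum_of_subset_of_nonneg hsub2 (fun x _ _ => hWnn x)) hkey
  have hstep2 : (∑ x ∈ Finset.univ.filter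
        (fun x : Fin n → ZMod p => ℓ ≤ (Finset.univ.filter (fun i => Goodb i x)).card), W x)
      ≤ ∑ x ∈ Finset.univ.filter
          (fun x : Fin n → ZMod p =>
            ∃ J : Fin ℓ → Finset (Fin n),
              (∀ j, (J j).card = s - 1) ∧ (∀ i j, i ≠ j → Disjoint (J i) (J j)) ∧
              ∀ j, ∃ g : Fin (n - s + 1) → Fin n, Function.Injective g ∧
                (∀ k, g k ∉ J j) ∧
                ((Matrix.of (Fin.snoc (fun i => B i) x)).submatrix id g).permanent ≠ 0), W x := by
    apply Finset.sum_le_sum_of_subset_of_nonneg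
    · intro x hx
      rw [Finset.mem_filter] at hx ⊢
      exact ⟨Finset.mem_univ x, hEvent x hx.2⟩
    · intro x _ _
      exact hWnn x
  calc 1 - ((p : ℝ))⁻¹ ^ s - ε = 1 - γt := by rw [hγdef]; ring
    _ ≤ 1 - (∑ x ∈ Finset.univ.filter
        (fun x : Fin n → ZMod p => ¬ ℓ ≤ (Finset.univ.filter (fun i => Goodb i x)).card), W x) :=
        by linarith
    _ = ∑ x ∈ Finset.univ.filter
        (fun x : Fin n → ZMod p => ℓ ≤ (Finset.univ.filter (fun i => Goodb i x)).card), W x := by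
        linarith
    _ ≤ _ := hstep2
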